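/- Let m ≥ 1 and let h_1,…,h_m : {0,…,9} → ℂ with E_j = ∑_{k=0}^4 h_j(2k) = ∑_{k=0}^4 h_j(2k+1) for all j. If each h_j has equal even and odd sums E_j, then for every 0 ≤ t < 2^m, ∑ { ∏_{j=1}^m h_j(x_j) : x ∈ {0,…,9}^m, D_m(x) ≡ t (mod 2^m) } = ∏_{j=1}^m E_j. -/

import Mathlib

open scoped Classical

noncomputable def Dn (n : ℕ) (x : Fin n → Fin 10) : ℕ :=
  ∑ j : Fin n, 10 ^ (j : ℕ) * (x j : ℕ)

lemma key (m t d : ℕ) (ht : t < 2 ^ (m + 1)) (hd : d < 10) (hpar : d % 2 = t % 2) :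
    ∃ t' < 2 ^ m, ∀ N : ℕ, ((d + 10 * N) % 2 ^ (m + 1) = t ↔ N % 2 ^ m = t') := by
  have hpow : (0:ℕ) < 2 ^ m := Nat.pow_pos (by norm_num)
  have hpow1 : (2:ℕ) ^ (m + 1) = 2 * 2 ^ m := by ring
  set P := 2 ^ m with hP
  set s : ℕ := (t + 10 * (2 * P) - d) / 2 with hs
  have h2s : 2 * s = t + 10 * (2 * P) - d := by
    rw [hs]; omega
  haveI : NeZero P := ⟨hpow.ne'⟩
  have hu : IsUnit (5 : ZMod P) := by
    have : ((5 : ℕ) : ZMod P) = (5 : ZMod P) := by push_cast; ring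
    rw [← this, ZMod.isUnit_iff_coprime]
    exact (Nat.coprime_two_right.mpr (by decide)).pow_right m
  set t' : ℕ := ((5 : ZMod P)⁻¹ * (s : ZMod P)).val with ht'
  refine ⟨t', ZMod.val_lt _, fun N => ?_⟩
  have h5 : ((5 * t' : ℕ) : ZMod P) = ((s : ℕ) : ZMod P) := by
    push_cast
    rw [ht']
    simp only [ZMod.natCast_val, ZMod.cast_id]
    rw [← mul_assoc, ZMod.mul_inv_of_unit _ hu, one_mul]
  have h5mod : 5 * t' ≡ s [MOD P] := (ZMod.natCast_eq_natCast_iff _ _ _).mp h5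
  constructor
  · intro hN
    have h1 : d + 10 * N ≡ t [MOD 2 ^ (m+1)] := by
      unfold Nat.ModEq; rw [Nat.mod_eq_of_lt ht]; exact hN
    have h2 : d + 10 * N ≡ d + 2 * s [MOD 2 ^ (m+1)] := by
      have : t + 10 * (2 * P) ≡ t [MOD 2 ^ (m+1)] := by
        show (t + 10 * (2 * P)) % _ = t % _
        rw [hpow1, mul_comm 10 (2 * P), Nat.add_mul_mod_self_left]
      have := h1.trans this.symm
      have heq : t + 10 * (2 * P) = d + 2 * s := by omega
      rwa [heq] at this
    have h3 : 10 * N ≡ 2 * s [MOD 2 ^ (m+1)] := h2.add_left_cancel' d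
    have h4 : 2 * (5 * N) ≡ 2 * s [MOD 2 * P] := by
      rw [show 2 * (5 * N) = 10 * N by ring, ← hpow1]; exact h3
    have h6 : 5 * N ≡ 5 * t' [MOD P] :=
      ((Nat.ModEq.mul_left_cancel_iff' two_ne_zero).mp h4).trans h5mod.symm
    have h7 : N ≡ t' [MOD P] :=
      Nat.ModEq.cancel_left_of_coprime (by
        simpa [Nat.coprime_comm] using (Nat.coprime_two_right.mpr (by decide : Odd 5)).pow_right m) h6
    rw [Nat.ModEq, Nat.mod_eq_of_lt (ZMod.val_lt _)] at h7
    exact h7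
  · intro hN
    have h7 : N ≡ t' [MOD P] := by
      unfold Nat.ModEq; rw [Nat.mod_eq_of_lt (ZMod.val_lt _)]; exact hN
    have h6 : 5 * N ≡ s [MOD P] := (h7.mul_left 5).trans h5mod
    have h4 : 2 * (5 * N) ≡ 2 * s [MOD 2 * P] := h6.mul_left' 2
    have h3 : 10 * N ≡ 2 * s [MOD 2 ^ (m+1)] := by
      rw [hpow1]; rw [← mul_assoc] at h4; exact h4
    have h2 : d + 10 * N ≡ d + 2 * s [MOD 2 ^ (m+1)] := h3.add_left d
    have heq : d + 2 * s = t + 10 * (2 * P) := by omega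
    rw [heq] at h2
    have : t + 10 * (2 * P) ≡ t [MOD 2 ^ (m+1)] := by
      show (t + 10 * (2 * P)) % _ = t % _
      rw [hpow1, mul_comm 10 (2 * P), Nat.add_mul_mod_self_left]
    have := h2.trans this
    rw [Nat.ModEq, Nat.mod_eq_of_lt ht] at this
    exact this

lemma prod_Icc_one (F : ℕ → ℂ) : ∀ n : ℕ,
    ∏ j ∈ Finset.Icc 1 n, F j = ∏ j ∈ Finset.range n, F (j + 1) := by
  intro n
  induction n with
  | zero => simp
  | succ n ih =>
    rw [Finset.prod_Icc_succ_top (Nat.le_add_left 1 n), Finset.prod_range_succ, ih]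

lemma main (m : ℕ) : ∀ (h : ℕ → ℕ → ℂ),
    (∀ j ∈ Finset.Icc 1 m,
      ∑ k ∈ Finset.range 5, h j (2 * k) = ∑ k ∈ Finset.range 5, h j (2 * k + 1)) →
    ∀ t < 2 ^ m,
      (∑ x ∈ Finset.univ.filter (fun x : Fin m → Fin 10 => Dn m x % 2 ^ m = t),
          ∏ j : Fin m, h ((j : ℕ) + 1) (x j))
        = ∏ j ∈ Finset.Icc 1 m, ∑ k ∈ Finset.range 5, h j (2 * k) := by
  induction m with
  | zero =>
    intro h _ t ht
    interval_cases t
    simp [Dn]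
  | succ m ih =>
    intro h hbal t ht
    have hD : ∀ (d : Fin 10) (x' : Fin m → Fin 10),
        Dn (m + 1) (Fin.cons d x') = (d : ℕ) + 10 * Dn m x' := by
      intro d x'
      simp only [Dn, Fin.sum_univ_succ, Fin.cons_zero, Fin.cons_succ, Fin.val_zero, pow_zero,
        one_mul, Fin.val_succ, Finset.mul_sum]
      congr 1
      exact Finset.sum_congr rfl fun i _ => by ring
    have hProd : ∀ (d : Fin 10) (x' : Fin m → Fin 10),
        (∏ j : Fin (m + 1), h ((j : ℕ) + 1) ((Fin.cons (α := fun _ : Fin (m+1) => Fin 10) d x' j : Fin 10) : ℕ))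
          = h 1 (d : ℕ) * ∏ j : Fin m, h ((j : ℕ) + 2) ((x' j : ℕ)) := by
      intro d x'
      rw [Fin.prod_univ_succ]
      simp [Fin.val_succ]
    rw [Finset.sum_filter]
    rw [← Equiv.sum_comp (Fin.consEquiv fun _ : Fin (m+1) => Fin 10)]
    rw [Fintype.sum_prod_type]
    simp only [Fin.consEquiv, Equiv.coe_fn_mk, hD, hProd]
    set Q : ℂ := ∏ j ∈ Finset.Icc 1 m, ∑ k ∈ Finset.range 5, h (j + 1) (2 * k) with hQ
    have hinner : ∀ d : Fin 10,
        (∑ x' : Fin m → Fin 10, if ((d : ℕ) + 10 * Dn m x') % 2 ^ (m + 1) = t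
            then h 1 (d : ℕ) * ∏ j : Fin m, h ((j : ℕ) + 2) ((x' j : ℕ)) else 0)
          = if (d : ℕ) % 2 = t % 2 then h 1 (d : ℕ) * Q else 0 := by
      intro d
      by_cases hpar : (d : ℕ) % 2 = t % 2
      · rw [if_pos hpar]
        obtain ⟨t', ht', hiff⟩ := key m t d ht d.isLt hpar
        have ihh := ih (fun j => h (j + 1)) (fun j hj => hbal (j + 1) (by
            simp only [Finset.mem_Icc] at hj ⊢; omega)) t' ht'
        rw [Finset.sum_filter] at ihh
        simp only [hiff]
        have hsplit : ∀ x' : Fin m → Fin 10,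
            (if Dn m x' % 2 ^ m = t' then h 1 (d : ℕ) * ∏ j : Fin m, h ((j : ℕ) + 2) ((x' j : ℕ)) else 0)
              = h 1 (d : ℕ) * (if Dn m x' % 2 ^ m = t' then ∏ j : Fin m, h ((j : ℕ) + 2) ((x' j : ℕ)) else 0) := by
          intro x'; split <;> simp
        rw [Finset.sum_congr rfl fun x' _ => hsplit x', ← Finset.mul_sum]
        rw [ihh]
      · rw [if_neg hpar]
        apply Finset.sum_eq_zero
        intro x' _
        rw [if_neg]
        intro hc
        apply hpar
        have h2 : ((d : ℕ) + 10 * Dn m x') % 2 ^ (m + 1) % 2 = ((d : ℕ) + 10 * Dn m x') % 2 :=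
          Nat.mod_mod_of_dvd _ (dvd_pow_self 2 (Nat.succ_ne_zero m))
        rw [hc] at h2
        omega
    rw [Finset.sum_congr rfl fun d _ => hinner d]
    have hsum : (∑ d : Fin 10, if (d : ℕ) % 2 = t % 2 then h 1 (d : ℕ) * Q else 0)
        = (∑ k ∈ Finset.range 5, h 1 (2 * k)) * Q := by
      rcases Nat.mod_two_eq_zero_or_one t with h0 | h1
      · rw [h0]
        simp [Fin.sum_univ_succ, Finset.sum_range_succ]
        ring
      · rw [h1, hbal 1 (by simp only [Finset.mem_Icc]; omega)]
        simp [Fin.sum_univ_succ, Finset.sum_range_succ]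
        ring
    rw [hsum, prod_Icc_one _ (m + 1), Finset.prod_range_succ']
    rw [hQ, prod_Icc_one (fun j => ∑ k ∈ Finset.range 5, h (j + 1) (2 * k)) m]
    ring

theorem uniform_vector (m : ℕ) (hm : 1 ≤ m) (h : ℕ → ℕ → ℂ)
    (hbal : ∀ j ∈ Finset.Icc 1 m,
      ∑ k ∈ Finset.range 5, h j (2 * k) = ∑ k ∈ Finset.range 5, h j (2 * k + 1)) :
    ∀ t < 2 ^ m,
      (∑ x ∈ Finset.univ.filter (fun x : Fin m → Fin 10 => Dn m x % 2 ^ m = t),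
          ∏ j : Fin m, h ((j : ℕ) + 1) (x j))
        = ∏ j ∈ Finset.Icc 1 m, ∑ k ∈ Finset.range 5, h j (2 * k) := by
  exact main m h hbal
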